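/- arXiv:1102.2050 — 3 statements merged into one kernel-verified Lean document; each statement's English description precedes it below -/
import Mathlib

section
/- Proposition 3.4(2): Let X be a continuous 𝒜-martingale adapted to a filtration 𝔽 = (𝓕_t)_{t∈[0,1]}, with X_t ∈ L¹(Ω) for each t. Suppose that 𝒜 contains all bounded 𝓟(𝔽)-measurable processes, where 𝓟(𝔽) is the σ-algebra on [0,1)×Ω generated by all left-continuous 𝔽-adapted processes. Then X is an 𝔽-martingale. -/
open MeasureTheory Filter Set Topology

noncomputable section

variable {Ω : Type*} [MeasurableSpace Ω]

/-- Convention `X_t = X_{(t ∨ 0) ∧ 1}` for `t ∈ ℝ`. -/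
def Clamped (X : ℝ → Ω → ℝ) : Prop :=
  ∀ t ω, X t ω = X (max 0 (min t 1)) ω

/-- The regularization `I(ε, Y, X, t) = ε⁻¹ ∫₀ᵗ Y_s (X_{s+ε} - X_s) ds`. -/
def fwdApprox (Y X : ℝ → Ω → ℝ) (ε t : ℝ) (ω : Ω) : ℝ :=
  ε⁻¹ * ∫ s in (0:ℝ)..t, Y s ω * (X (s + ε) ω - X s ω)

/-- The regularization `C(ε, X, Y, t) = ε⁻¹ ∫₀ᵗ (X_{s+ε} - X_s)(Y_{s+ε} - Y_s) ds`. -/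
def covApprox (X Y : ℝ → Ω → ℝ) (ε t : ℝ) (ω : Ω) : ℝ :=
  ε⁻¹ * ∫ s in (0:ℝ)..t, (X (s + ε) ω - X s ω) * (Y (s + ε) ω - Y s ω)

/-- `J` is (a continuous version of) the forward integral `∫₀· Y d⁻X` on `[0,1]`:
for every `t ∈ [0,1]` the regularizations converge in probability to `J t`,
and `J` has continuous paths on `[0,1]`. -/
def IsForwardIntegral (P : Measure Ω) (Y X J : ℝ → Ω → ℝ) : Prop :=
  (∀ ω, ContinuousOn (fun t => J t ω) (Icc 0 1)) ∧
  ∀ t ∈ Icc (0:ℝ) 1,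
    TendstoInMeasure P (fun ε => fwdApprox Y X ε t) (𝓝[>] (0:ℝ)) (J t)

/-- Convergence uniformly in probability (ucp) on `[0,T]`, as `ε → 0⁺`. -/
def TendstoUcpOn (P : Measure Ω) (F : ℝ → ℝ → Ω → ℝ) (G : ℝ → Ω → ℝ) (T : ℝ) : Prop :=
  TendstoInMeasure P
    (fun ε ω => ⨆ t : Icc (0:ℝ) T, |F ε t.1 ω - G t.1 ω|) (𝓝[>] (0:ℝ)) (fun _ => 0)

/-- `C` is the covariation process `[X,Y]` on `[0,T]`. -/
def IsCovariationOn (P : Measure Ω) (X Y C : ℝ → Ω → ℝ) (T : ℝ) : Prop :=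
  (∀ ω, ContinuousOn (fun t => C t ω) (Icc 0 T)) ∧
  TendstoUcpOn P (covApprox X Y) C T

/-- `C` is the covariation process `[X,Y]` on `[0,1]`. -/
def IsCovariation (P : Measure Ω) (X Y C : ℝ → Ω → ℝ) : Prop :=
  IsCovariationOn P X Y C 1

/-- The restricted process `Y · 1_{[0,t]}`. -/
def restrTo (t : ℝ) (Y : ℝ → Ω → ℝ) : ℝ → Ω → ℝ :=
  fun s ω => Set.indicator (Icc 0 t) (fun u => Y u ω) s

/-- `J` is the improper forward integral process `∫₀· Y d⁻X` on `[0,1]`: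
on each `[0,t]`, `t < 1`, it is the forward integral of `Y·1_{[0,t]}` w.r.t. `X`,
and `J t → J 1` a.s. as `t → 1⁻`. -/
def IsImproperForwardIntegral (P : Measure Ω) (Y X J : ℝ → Ω → ℝ) : Prop :=
  (∀ t ∈ Ico (0:ℝ) 1,
    IsForwardIntegral P (restrTo t Y) X (fun u ω => J (min u t) ω)) ∧
  ∀ᵐ ω ∂P, Tendsto (fun t => J t ω) (𝓝[<] (1:ℝ)) (𝓝 (J 1 ω))

/-- `C` is the improper covariation `[X,Y]`: it is the covariation on every `[0,t]`,
`t < 1`, and `C t → C 1` a.s. as `t → 1⁻`. -/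
def IsImproperCovariation (P : Measure Ω) (X Y C : ℝ → Ω → ℝ) : Prop :=
  (∀ t ∈ Ico (0:ℝ) 1, IsCovariationOn P X Y C t) ∧
  ∀ᵐ ω ∂P, Tendsto (fun t => C t ω) (𝓝[<] (1:ℝ)) (𝓝 (C 1 ω))

/-- `M` is an `𝒜`-martingale under `P`: every `θ ∈ 𝒜` is `M`-improperly forward
integrable and `E[∫₀ᵗ θ d⁻M] = 0` for every `t ∈ [0,1]`. -/
def IsAMartingale (P : Measure Ω) (𝒜 : Set (ℝ → Ω → ℝ)) (M : ℝ → Ω → ℝ) : Prop :=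
  ∀ θ ∈ 𝒜, ∃ J : ℝ → Ω → ℝ,
    IsImproperForwardIntegral P θ M J ∧
    ∀ t ∈ Icc (0:ℝ) 1, ∫ ω, J t ω ∂P = 0

/-- `𝒜` is a real linear space of measurable processes (indexed by `[0,1)`)
whose paths are bounded on each compact interval of `[0,1)`. -/
def IsAdmissibleClass (𝒜 : Set (ℝ → Ω → ℝ)) : Prop :=
  (∀ c : ℝ, ∀ θ ∈ 𝒜, (fun t ω => c * θ t ω) ∈ 𝒜) ∧
  (∀ θ ∈ 𝒜, ∀ η ∈ 𝒜, (fun t ω => θ t ω + η t ω) ∈ 𝒜) ∧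
  (∀ θ ∈ 𝒜, Measurable (Function.uncurry θ)) ∧
  (∀ θ ∈ 𝒜, ∀ ω, ∀ T ∈ Ico (0:ℝ) 1, ∃ K, ∀ t ∈ Icc (0:ℝ) T, |θ t ω| ≤ K)

/-- A process which is left continuous and `𝔽`-adapted. -/
def IsLeftContinuousAdapted (𝓕 : ℝ → MeasurableSpace Ω) (Y : ℝ → Ω → ℝ) : Prop :=
  (∀ ω t, ContinuousWithinAt (fun s => Y s ω) (Iio t) t) ∧
  ∀ t, Measurable[𝓕 t] (Y t)

/-- The σ-algebra `𝓟(𝔽)` generated by all left-continuous `𝔽`-adapted processes. -/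
def predictableSigma (𝓕 : ℝ → MeasurableSpace Ω) : MeasurableSpace (ℝ × Ω) :=
  ⨆ (Y : ℝ → Ω → ℝ) (_ : IsLeftContinuousAdapted 𝓕 Y),
    MeasurableSpace.comap (fun p => Y p.1 p.2) (inferInstance : MeasurableSpace ℝ)


section Helpers

lemma aux_tendsto_avg (f : ℝ → ℝ) (hf : Continuous f) (a : ℝ) :
    Tendsto (fun ε : ℝ => ε⁻¹ * ∫ r in a..(a+ε), f r) (𝓝[>] 0) (𝓝 (f a)) := by
  have hF : HasDerivAt (fun x => ∫ r in a..x, f r) (f a) a :=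
    intervalIntegral.integral_hasDerivAt_right (hf.intervalIntegrable _ _)
      ⟨Set.univ, univ_mem, hf.aestronglyMeasurable.restrict⟩ hf.continuousAt
  have hslope := hasDerivAt_iff_tendsto_slope.mp hF
  have hmap : Tendsto (fun ε : ℝ => a + ε) (𝓝[>] (0:ℝ)) (𝓝[≠] a) := by
    rw [tendsto_nhdsWithin_iff]
    constructor
    · have : Tendsto (fun ε : ℝ => a + ε) (𝓝 (0:ℝ)) (𝓝 a) := by
        simpa using (tendsto_const_nhds.add tendsto_id :
          Tendsto (fun ε : ℝ => a + ε) (𝓝 0) (𝓝 (a + 0)))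
      exact this.mono_left nhdsWithin_le_nhds
    · filter_upwards [self_mem_nhdsWithin] with ε (hε : 0 < ε)
      simp [ne_of_gt, hε.ne']
  have h2 := hslope.comp hmap
  refine h2.congr fun ε => ?_
  simp [slope_def_field, intervalIntegral.integral_same, div_eq_inv_mul]

lemma aux_ae_eq_of_tendstoInMeasure {Ω : Type*} [MeasurableSpace Ω] (P : Measure Ω)
    (F : ℝ → Ω → ℝ) (g h : Ω → ℝ)
    (h1 : TendstoInMeasure P F (𝓝[>] (0:ℝ)) g)
    (h2 : ∀ ω, Tendsto (fun ε => F ε ω) (𝓝[>] (0:ℝ)) (𝓝 (h ω))) : g =ᵐ[P] h := by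
  set u : ℕ → ℝ := fun n => ((n:ℝ)+1)⁻¹ with hu_def
  have hu : Tendsto u atTop (𝓝[>] (0:ℝ)) := by
    rw [tendsto_nhdsWithin_iff]
    refine ⟨by simpa [hu_def, one_div] using tendsto_one_div_add_atTop_nhds_zero_nat (𝕜 := ℝ), ?_⟩
    exact Eventually.of_forall fun n => Set.mem_Ioi.mpr (by positivity)
  have h1' : TendstoInMeasure P (fun n => F (u n)) atTop g := fun ε hε => (h1 ε hε).comp hu
  obtain ⟨ns, hmono, hae⟩ := h1'.exists_seq_tendsto_ae
  filter_upwards [hae] with ω hω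
  exact tendsto_nhds_unique hω ((h2 ω).comp (hu.comp hmono.tendsto_atTop))

lemma aux_fwd_eq (X : ℝ → ℝ) (hX : Continuous X) (s t' ε c : ℝ) (hs : 0 ≤ s) (hst : s ≤ t') :
    (∫ r in (0:ℝ)..t', (Ioc s t').indicator (fun r => c * (X (r+ε) - X r)) r)
      = c * ((∫ r in t'..(t'+ε), X r) - ∫ r in s..(s+ε), X r) := by
  have hXe : Continuous fun r : ℝ => X (r + ε) := hX.comp (continuous_id.add continuous_const)
  rw [intervalIntegral.integral_of_le (hs.trans hst),
    MeasureTheory.setIntegral_indicator measurableSet_Ioc,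
    Set.inter_eq_right.mpr (Set.Ioc_subset_Ioc_left hs),
    ← intervalIntegral.integral_of_le hst, intervalIntegral.integral_const_mul]
  congr 1
  rw [intervalIntegral.integral_sub (hXe.intervalIntegrable _ _) (hX.intervalIntegrable _ _),
    intervalIntegral.integral_comp_add_right]
  exact intervalIntegral.integral_interval_sub_interval_comm' (hX.intervalIntegrable _ _)
    (hX.intervalIntegrable _ _) (hX.intervalIntegrable _ _)

end Helpers

/-- Proposition 3.4(2): a continuous `𝒜`-martingale `X` adapted to `𝔽`, with `X_t ∈ L¹`,
is an `𝔽`-martingale whenever `𝒜` contains all bounded `𝓟(𝔽)`-measurable processes. -/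
theorem A_martingale_is_martingale_of_contains_bounded_predictable
    (P : Measure Ω) [IsProbabilityMeasure P]
    (𝓕 : ℝ → MeasurableSpace Ω)
    (h𝓕mono : ∀ s t : ℝ, s ≤ t → 𝓕 s ≤ 𝓕 t)
    (h𝓕le : ∀ t, 𝓕 t ≤ ‹MeasurableSpace Ω›)
    (𝒜 : Set (ℝ → Ω → ℝ)) (h𝒜 : IsAdmissibleClass 𝒜)
    (X : ℝ → Ω → ℝ) (hXclamp : Clamped X)
    (hXcont : ∀ ω, ContinuousOn (fun t => X t ω) (Icc 0 1))
    (hXadapted : ∀ t ∈ Icc (0:ℝ) 1, Measurable[𝓕 t] (X t))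
    (hXint : ∀ t ∈ Icc (0:ℝ) 1, Integrable (X t) P)
    (hXmart : IsAMartingale P 𝒜 X)
    (hcontains : ∀ θ : ℝ → Ω → ℝ,
      Measurable[predictableSigma 𝓕] (fun p : ℝ × Ω => θ p.1 p.2) →
      (∃ K, ∀ t ω, |θ t ω| ≤ K) → θ ∈ 𝒜) :
    ∀ s t : ℝ, 0 ≤ s → s ≤ t → t ≤ 1 →
      X s =ᵐ[P] P[X t | 𝓕 s] := by
  classical
  -- global continuity of paths
  have hclamp : Continuous fun u : ℝ => max 0 (min u 1) :=
    continuous_const.max (continuous_id.min continuous_const)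
  have hXc : ∀ ω, Continuous fun u => X u ω := by
    intro ω
    have h1 : Continuous ((fun v => X v ω) ∘ fun u : ℝ => max 0 (min u 1)) :=
      (hXcont ω).comp_continuous hclamp
        (fun u => ⟨le_max_left _ _, max_le zero_le_one (min_le_right _ _)⟩)
    have h2 : (fun u => X u ω) = (fun v => X v ω) ∘ fun u : ℝ => max 0 (min u 1) :=
      funext fun u => hXclamp u ω
    rw [h2]; exact h1
  intro s t hs0 hst ht1
  have hs1 : s ≤ 1 := hst.trans ht1
  have ht0 : (0:ℝ) ≤ t := hs0.trans hst
  have hsmem : s ∈ Icc (0:ℝ) 1 := ⟨hs0, hs1⟩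
  have htmem : t ∈ Icc (0:ℝ) 1 := ⟨ht0, ht1⟩
  -- key set-integral identity
  have key : ∀ A : Set Ω, MeasurableSet[𝓕 s] A →
      ∫ ω in A, X t ω ∂P = ∫ ω in A, X s ω ∂P := by
    intro A hA
    rcases eq_or_lt_of_le hst with rfl | hstlt
    · rfl
    have hAm : MeasurableSet A := h𝓕le s A hA
    -- the test process
    set θ : ℝ → Ω → ℝ := fun u ω => if s < u ∧ ω ∈ A then (1:ℝ) else 0 with hθdef
    have hLCA : IsLeftContinuousAdapted 𝓕 θ := by
      constructor
      · intro ω u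
        by_cases hω : ω ∈ A
        · by_cases hu : s < u
          · refine (continuousWithinAt_const : ContinuousWithinAt (fun _ : ℝ => (1:ℝ)) (Iio u) u).congr_of_eventuallyEq ?_
              (by simp [hθdef, hu, hω])
            have : ∀ᶠ x in 𝓝[Iio u] u, s < x :=
              eventually_nhdsWithin_of_eventually_nhds (eventually_gt_nhds hu)
            filter_upwards [this] with x hx
            simp [hθdef, hx, hω]
          · refine (continuousWithinAt_const : ContinuousWithinAt (fun _ : ℝ => (0:ℝ)) (Iio u) u).congr_of_eventuallyEq ?_
              (by simp [hθdef, hu])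
            filter_upwards [eventually_nhdsWithin_of_forall
              (fun x (hx : x ∈ Iio u) => hx)] with x hx
            have : ¬ s < x := fun h => hu (h.trans hx)
            simp [hθdef, this]
        · have : (fun v => θ v ω) = fun _ => (0:ℝ) := funext fun v => by simp [hθdef, hω]
          rw [this]; exact continuousWithinAt_const
      · intro u
        by_cases hu : s < u
        · have hAu : MeasurableSet[𝓕 u] A := h𝓕mono s u hu.le A hA
          have : θ u = fun ω => if ω ∈ A then (1:ℝ) else 0 :=
            funext fun ω => by simp [hθdef, hu]
          rw [this]
          exact Measurable.ite hAu measurable_const measurable_const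
        · have : θ u = fun _ => (0:ℝ) := funext fun ω => by simp [hθdef, hu]
          rw [this]; exact measurable_const
    have hθmeas : Measurable[predictableSigma 𝓕] (fun p : ℝ × Ω => θ p.1 p.2) := by
      have h1 : Measurable[MeasurableSpace.comap (fun p : ℝ × Ω => θ p.1 p.2)
          (inferInstance : MeasurableSpace ℝ)] (fun p : ℝ × Ω => θ p.1 p.2) :=
        measurable_iff_comap_le.mpr le_rfl
      refine h1.mono ?_ le_rfl
      exact le_iSup₂ (f := fun (Y : ℝ → Ω → ℝ) (_ : IsLeftContinuousAdapted 𝓕 Y) =>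
        MeasurableSpace.comap (fun p : ℝ × Ω => Y p.1 p.2)
          (inferInstance : MeasurableSpace ℝ)) θ hLCA
    have hθ𝒜 : θ ∈ 𝒜 := hcontains θ hθmeas ⟨1, fun u ω => by
      by_cases h : s < u ∧ ω ∈ A <;> simp [hθdef, h]⟩
    obtain ⟨J, ⟨hJfwd, hJlim⟩, hJ0⟩ := hXmart θ hθ𝒜
    -- the candidate limit process
    set g : ℝ → Ω → ℝ := fun u ω => if ω ∈ A then X u ω - X s ω else 0 with hg_def
    -- pointwise convergence of the regularizations
    have hptw : ∀ t', s ≤ t' → ∀ ω,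
        Tendsto (fun ε => fwdApprox (restrTo t' θ) X ε t' ω) (𝓝[>] (0:ℝ))
          (𝓝 (g t' ω)) := by
      intro t' hst' ω
      set c : ℝ := if ω ∈ A then 1 else 0 with hc_def
      have heq : ∀ ε : ℝ, fwdApprox (restrTo t' θ) X ε t' ω
          = c * ((ε⁻¹ * ∫ r in t'..(t'+ε), X r ω) - ε⁻¹ * ∫ r in s..(s+ε), X r ω) := by
        intro ε
        have hint : ∀ r : ℝ, restrTo t' θ r ω * (X (r+ε) ω - X r ω)
            = (Ioc s t').indicator (fun r => c * (X (r+ε) ω - X r ω)) r := by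
          intro r
          by_cases hr : r ∈ Ioc s t'
          · have hrIcc : r ∈ Icc (0:ℝ) t' := ⟨hs0.trans hr.1.le, hr.2⟩
            by_cases hω : ω ∈ A <;>
              simp [restrTo, Set.indicator_of_mem, hrIcc, hr, hθdef, hc_def, hω, hr.1]
          · rw [Set.indicator_of_notMem hr]
            by_cases hrIcc : r ∈ Icc (0:ℝ) t'
            · have : ¬ s < r := fun h => hr ⟨h, hrIcc.2⟩
              simp [restrTo, Set.indicator_of_mem, hrIcc, hθdef, this]
            · simp [restrTo, Set.indicator_of_notMem, hrIcc]
        have := aux_fwd_eq (fun u => X u ω) (hXc ω) s t' ε c hs0 hst'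
        simp only [fwdApprox, intervalIntegral.integral_congr
          (g := fun r => (Ioc s t').indicator (fun r => c * (X (r+ε) ω - X r ω)) r)
          (fun r _ => hint r), this]
        ring
      have h1 := aux_tendsto_avg (fun u => X u ω) (hXc ω) t'
      have h2 := aux_tendsto_avg (fun u => X u ω) (hXc ω) s
      have h3 := ((h1.sub h2).const_mul c)
      have hgc : g t' ω = c * (X t' ω - X s ω) := by
        by_cases hω : ω ∈ A <;> simp [hg_def, hc_def, hω]
      rw [hgc]
      exact h3.congr fun ε => (heq ε).symm
    -- identification of J on [s, 1)
    have hkeyJ : ∀ t', s ≤ t' → t' < 1 → J t' =ᵐ[P] g t' := by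
      intro t' hst' ht'1
      have h0t' : (0:ℝ) ≤ t' := hs0.trans hst'
      have h1 := (hJfwd t' ⟨h0t', ht'1⟩).2 t' ⟨h0t', ht'1.le⟩
      simp only [min_self] at h1
      exact aux_ae_eq_of_tendstoInMeasure P _ _ _ h1 (hptw t' hst')
    -- identification of J at t
    have hkeyJt : J t =ᵐ[P] g t := by
      rcases lt_or_eq_of_le ht1 with htlt | rfl
      · exact hkeyJ t hst htlt
      · -- t = 1 : pass to the limit
        set tn : ℕ → ℝ := fun n => max s (1 - ((n:ℝ)+1)⁻¹) with htn_def
        have htn_lt : ∀ n, tn n < 1 := fun n => by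
          have : (0:ℝ) < ((n:ℝ)+1)⁻¹ := by positivity
          exact max_lt hstlt (by linarith)
        have htn_ge : ∀ n, s ≤ tn n := fun n => le_max_left _ _
        have htn_tend : Tendsto tn atTop (𝓝[<] (1:ℝ)) := by
          rw [tendsto_nhdsWithin_iff]
          constructor
          · have h1 : Tendsto (fun n : ℕ => 1 - ((n:ℝ)+1)⁻¹) atTop (𝓝 (1:ℝ)) := by
              have h0 := tendsto_one_div_add_atTop_nhds_zero_nat (𝕜 := ℝ)
              simp only [one_div] at h0
              simpa using ((tendsto_const_nhds : Tendsto (fun _ : ℕ => (1:ℝ)) atTop (𝓝 1)).sub h0)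
            have h2 := (tendsto_const_nhds (x := s)).max h1
            simpa [max_eq_right hs1] using h2
          · exact Eventually.of_forall fun n => htn_lt n
        have hae1 : ∀ᵐ ω ∂P, ∀ n, J (tn n) ω = g (tn n) ω :=
          ae_all_iff.mpr fun n => hkeyJ (tn n) (htn_ge n) (htn_lt n)
        filter_upwards [hae1, hJlim] with ω hω1 hω2
        have hJt : Tendsto (fun n => J (tn n) ω) atTop (𝓝 (J 1 ω)) := hω2.comp htn_tend
        have hgt : Tendsto (fun n => g (tn n) ω) atTop (𝓝 (g 1 ω)) := by
          by_cases hω : ω ∈ A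
          · simp only [hg_def, hω, if_true]
            exact (((hXc ω).tendsto 1).comp (htn_tend.mono_right nhdsWithin_le_nhds)).sub
              tendsto_const_nhds
          · simp only [hg_def, hω, if_false]
            exact tendsto_const_nhds
        exact tendsto_nhds_unique hJt (hgt.congr fun n => (hω1 n).symm)
    -- conclude from E[J t] = 0
    have hint_zero : ∫ ω, g t ω ∂P = 0 := by
      rw [← integral_congr_ae hkeyJt]
      exact hJ0 t htmem
    have hgind : (fun ω => g t ω) = A.indicator (fun ω => X t ω - X s ω) := by
      funext ω
      by_cases hω : ω ∈ A <;> simp [hg_def, hω]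
    rw [hgind, MeasureTheory.integral_indicator hAm,
      MeasureTheory.integral_sub ((hXint t htmem).integrableOn)
        ((hXint s hsmem).integrableOn), sub_eq_zero] at hint_zero
    exact hint_zero
  -- conclude via uniqueness of conditional expectation
  refine MeasureTheory.ae_eq_condExp_of_forall_setIntegral_eq (h𝓕le s) (hXint t htmem)
    (fun A _ _ => (hXint s hsmem).integrableOn) (fun A hA _ => ?_) ?_
  · exact (key A hA).symm
  · exact StronglyMeasurable.aestronglyMeasurable
      ((hXadapted s hsmem).stronglyMeasurable)
end
end

section
/- Proposition 4.26: Suppose the market is 𝒜-arbitrage free and that Assumption 4.25 holds: for every 𝒢₀-measurable random variable η and every h ∈ 𝒜, the process ηh belongs to 𝒜. Then the replication price of an 𝒜-attainable contingent claim is unique: if (X₀,h) and (Y₀,k), with h, k ∈ 𝒜 both S-improperly forward integrable, both replicate the same contingent claim C, then X₀ = Y₀ almost surely. -/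
open MeasureTheory Filter Set Topology

noncomputable section

variable {Ω : Type*} [MeasurableSpace Ω]

/-- `h` (with zero initial wealth) is an arbitrage: it is `S`-improperly forward
integrable, with terminal wealth `X₁ = ∫₀¹ h d⁻S ≥ 0` a.s. and `P(X₁ > 0) > 0`. -/
def IsArbitrage (P : Measure Ω) (S h : ℝ → Ω → ℝ) : Prop :=
  ∃ J : ℝ → Ω → ℝ, IsImproperForwardIntegral P h S J ∧
    (∀ᵐ ω ∂P, 0 ≤ J 1 ω) ∧ 0 < P {ω | 0 < J 1 ω}

/-- The market is `𝒜`-arbitrage free. -/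
def ArbitrageFree (P : Measure Ω) (S : ℝ → Ω → ℝ) (𝒜 : Set (ℝ → Ω → ℝ)) : Prop :=
  ∀ h ∈ 𝒜, ¬ IsArbitrage P S h

section Aux

variable {Ω : Type*} [MeasurableSpace Ω]

/-- Combination lemma: multiplying by a function bounded by 1 and subtracting preserves
convergence in measure. -/
lemma tendstoInMeasure_mul_sub {ι : Type*} (P : Measure Ω) {l : Filter ι}
    {η : Ω → ℝ} (hη : ∀ ω, |η ω| ≤ 1)
    {f f' : ι → Ω → ℝ} {g g' : Ω → ℝ}
    (h1 : TendstoInMeasure P f l g) (h2 : TendstoInMeasure P f' l g') :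
    TendstoInMeasure P (fun i ω => η ω * (f i ω - f' i ω)) l
      (fun ω => η ω * (g ω - g' ω)) := by
  rw [tendstoInMeasure_iff_dist] at h1 h2 ⊢
  intro δ hδ
  have hδ2 : 0 < δ / 2 := by positivity
  have key : ∀ i,
      P {ω | δ ≤ dist (η ω * (f i ω - f' i ω)) (η ω * (g ω - g' ω))}
        ≤ P {ω | δ / 2 ≤ dist (f i ω) (g ω)} + P {ω | δ / 2 ≤ dist (f' i ω) (g' ω)} := by
    intro i
    refine le_trans (measure_mono ?_) (measure_union_le _ _)
    intro ω hω
    simp only [Set.mem_setOf_eq, Real.dist_eq] at hω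
    simp only [Set.mem_union, Set.mem_setOf_eq, Real.dist_eq]
    by_contra hcon
    push_neg at hcon
    obtain ⟨hc1, hc2⟩ := hcon
    have e1 : |η ω * (f i ω - f' i ω) - η ω * (g ω - g' ω)|
        = |η ω| * |(f i ω - g ω) - (f' i ω - g' ω)| := by
      rw [← abs_mul]; ring_nf
    have e2 : |(f i ω - g ω) - (f' i ω - g' ω)| ≤ |f i ω - g ω| + |f' i ω - g' ω| :=
      abs_sub _ _
    have hab : (0:ℝ) ≤ |(f i ω - g ω) - (f' i ω - g' ω)| := abs_nonneg _
    nlinarith [abs_nonneg (η ω), hη ω]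
  have hsum : Filter.Tendsto
      (fun i => P {ω | δ / 2 ≤ dist (f i ω) (g ω)} + P {ω | δ / 2 ≤ dist (f' i ω) (g' ω)})
      l (nhds 0) := by
    have := (h1 (δ / 2) hδ2).add (h2 (δ / 2) hδ2)
    simpa using this
  exact tendsto_of_tendsto_of_tendsto_of_le_of_le tendsto_const_nhds hsum
    (fun i => zero_le) key

/-- A measurable, indicator-restricted, bounded process times a continuous increment is
interval integrable. -/
lemma intervalIntegrable_restr {S : ℝ → Ω → ℝ} (ω : Ω)
    (hS : Continuous fun s => S s ω) (θ : ℝ → Ω → ℝ)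
    (hmeas : Measurable fun s => θ s ω) (t : ℝ) (K : ℝ)
    (hK : ∀ s ∈ Icc (0:ℝ) t, |θ s ω| ≤ K) (ε u : ℝ) :
    IntervalIntegrable (fun s => restrTo t θ s ω * (S (s + ε) ω - S s ω)) volume 0 u := by
  have hcont : Continuous fun s : ℝ => S (s + ε) ω - S s ω := by
    have : Continuous fun s : ℝ => S (s + ε) ω := hS.comp (continuous_add_right ε)
    exact this.sub hS
  have hbdd : ∀ s, ‖restrTo t θ s ω‖ ≤ max K 0 := by
    intro s
    rw [Real.norm_eq_abs]
    unfold restrTo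
    by_cases hs : s ∈ Icc (0:ℝ) t
    · rw [Set.indicator_of_mem hs]
      exact le_max_of_le_left (hK s hs)
    · rw [Set.indicator_of_notMem hs]
      simpa using le_max_right K 0
  have hmeas' : Measurable fun s => restrTo t θ s ω := by
    unfold restrTo
    exact hmeas.indicator measurableSet_Icc
  have base : IntervalIntegrable (fun s => restrTo t θ s ω) volume 0 u := by
    rw [intervalIntegrable_iff]
    refine Integrable.mono' (g := fun _ => max K 0)
      (integrableOn_const measure_Ioc_lt_top.ne)
      hmeas'.aestronglyMeasurable (Filter.Eventually.of_forall fun s => hbdd s)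
  exact base.mul_continuousOn hcont.continuousOn

end Aux

/-- Proposition 4.26: in an `𝒜`-arbitrage free market satisfying Assumption 4.25, the
replication price of an `𝒜`-attainable contingent claim is unique. -/
theorem replication_price_unique
    (P : Measure Ω) [IsProbabilityMeasure P]
    (𝓖 : ℝ → MeasurableSpace Ω)
    (h𝓖mono : ∀ s t : ℝ, s ≤ t → 𝓖 s ≤ 𝓖 t)
    (h𝓖le : ∀ t, 𝓖 t ≤ ‹MeasurableSpace Ω›)
    (𝒜 : Set (ℝ → Ω → ℝ)) (h𝒜 : IsAdmissibleClass 𝒜)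
    (S : ℝ → Ω → ℝ) (hSclamp : Clamped S)
    (hScont : ∀ ω, ContinuousOn (fun t => S t ω) (Icc 0 1))
    (hSpos : ∀ t ω, 0 < S t ω)
    (hSqv : ∃ C, IsCovariation P S S C)
    (hNoArb : ArbitrageFree P S 𝒜)
    -- Assumption 4.25
    (hAss425 : ∀ η : Ω → ℝ, Measurable[𝓖 0] η →
      ∀ h ∈ 𝒜, (fun t ω => η ω * h t ω) ∈ 𝒜)
    (C : Ω → ℝ) (X0 Y0 : Ω → ℝ)
    (hX0 : Measurable[𝓖 0] X0) (hY0 : Measurable[𝓖 0] Y0)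
    (h k : ℝ → Ω → ℝ) (hh : h ∈ 𝒜) (hk : k ∈ 𝒜)
    (Jh Jk : ℝ → Ω → ℝ)
    (hJh : IsImproperForwardIntegral P h S Jh)
    (hJk : IsImproperForwardIntegral P k S Jk)
    (hrepl1 : ∀ᵐ ω ∂P, X0 ω + Jh 1 ω = C ω)
    (hrepl2 : ∀ᵐ ω ∂P, Y0 ω + Jk 1 ω = C ω) :
    ∀ᵐ ω ∂P, X0 ω = Y0 ω := by
  by_contra hne
  -- the sign of X0 - Y0
  set η : Ω → ℝ := fun ω =>
    Set.indicator {ω | Y0 ω < X0 ω} (fun _ => (1:ℝ)) ω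
      - Set.indicator {ω | X0 ω < Y0 ω} (fun _ => (1:ℝ)) ω with hηdef
  have hηmeas : Measurable[𝓖 0] η := by
    have m1 : MeasurableSet[𝓖 0] {ω | Y0 ω < X0 ω} := measurableSet_lt hY0 hX0
    have m2 : MeasurableSet[𝓖 0] {ω | X0 ω < Y0 ω} := measurableSet_lt hX0 hY0
    exact Measurable.sub (Measurable.indicator measurable_const m1)
      (Measurable.indicator measurable_const m2)
  have hηbdd : ∀ ω, |η ω| ≤ 1 := by
    intro ω
    simp only [hηdef]
    by_cases h1 : Y0 ω < X0 ω <;> by_cases h2 : X0 ω < Y0 ω <;>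
      simp [Set.indicator_apply, h1, h2] <;> norm_num
  have hηsign : ∀ ω, η ω * (X0 ω - Y0 ω) = |X0 ω - Y0 ω| := by
    intro ω
    simp only [hηdef]
    rcases lt_trichotomy (X0 ω) (Y0 ω) with hc | hc | hc
    · rw [abs_of_nonpos (by linarith)]
      simp [Set.indicator_apply, hc, not_lt.2 hc.le]
    · simp [Set.indicator_apply, hc]
    · rw [abs_of_nonneg (by linarith)]
      simp [Set.indicator_apply, hc, not_lt.2 hc.le]
  -- the candidate arbitrage portfolio
  set θ : ℝ → Ω → ℝ := fun t ω => η ω * (k t ω + (-1) * h t ω) with hθdef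
  have hθ𝒜 : θ ∈ 𝒜 :=
    hAss425 η hηmeas _ (h𝒜.2.1 k hk _ (h𝒜.1 (-1) h hh))
  -- the candidate gains process
  set J : ℝ → Ω → ℝ := fun t ω => η ω * (Jk t ω - Jh t ω) with hJdef
  -- continuity of S in time
  have hScontAll : ∀ ω, Continuous fun s => S s ω := by
    intro ω
    have heq : (fun s => S s ω) = fun s => S (max 0 (min s 1)) ω :=
      funext fun s => hSclamp s ω
    rw [heq]
    have hclamp : Continuous fun s : ℝ => max 0 (min s 1) :=
      continuous_const.max (continuous_id.min continuous_const)
    have hmem : ∀ s : ℝ, max 0 (min s 1) ∈ Icc (0:ℝ) 1 := fun s =>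
      ⟨le_max_left _ _, max_le zero_le_one (min_le_right s 1)⟩
    exact (hScont ω).comp_continuous hclamp hmem
  -- sections of admissible processes are measurable
  have hsect : ∀ g : ℝ → Ω → ℝ, g ∈ 𝒜 → ∀ ω, Measurable fun s => g s ω := by
    intro g hg ω
    exact (h𝒜.2.2.1 g hg).comp (measurable_id.prodMk measurable_const)
  -- key algebraic identity for the approximants
  have happrox : ∀ t ∈ Ico (0:ℝ) 1, ∀ ε u : ℝ, ∀ ω,
      fwdApprox (restrTo t θ) S ε u ω
        = η ω * (fwdApprox (restrTo t k) S ε u ω - fwdApprox (restrTo t h) S ε u ω) := by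
    intro t ht ε u ω
    obtain ⟨Kk, hKk⟩ := h𝒜.2.2.2 k hk ω t ht
    obtain ⟨Kh, hKh⟩ := h𝒜.2.2.2 h hh ω t ht
    have intk := intervalIntegrable_restr ω (hScontAll ω) k (hsect k hk ω) t Kk hKk ε u
    have inth := intervalIntegrable_restr ω (hScontAll ω) h (hsect h hh ω) t Kh hKh ε u
    have hpt : ∀ s, restrTo t θ s ω * (S (s + ε) ω - S s ω)
        = η ω * (restrTo t k s ω * (S (s + ε) ω - S s ω)
            - restrTo t h s ω * (S (s + ε) ω - S s ω)) := by
      intro s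
      unfold restrTo
      by_cases hs : s ∈ Icc (0:ℝ) t
      · simp only [Set.indicator_of_mem hs, hθdef]
        ring
      · simp [Set.indicator_of_notMem hs]
    unfold fwdApprox
    simp only [hpt]
    rw [intervalIntegral.integral_const_mul, intervalIntegral.integral_sub intk inth]
    ring
  -- J is the improper forward integral of θ
  have hJint : IsImproperForwardIntegral P θ S J := by
    constructor
    · intro t ht
      have Hk := hJk.1 t ht
      have Hh := hJh.1 t ht
      constructor
      · intro ω
        have ck := Hk.1 ω
        have ch := Hh.1 ω
        exact continuousOn_const.mul (ck.sub ch)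
      · intro u hu
        have tk := Hk.2 u hu
        have th := Hh.2 u hu
        have := tendstoInMeasure_mul_sub P hηbdd tk th
        have heqf : (fun ε => fwdApprox (restrTo t θ) S ε u)
            = fun ε ω => η ω * (fwdApprox (restrTo t k) S ε u ω
                - fwdApprox (restrTo t h) S ε u ω) :=
          funext fun ε => funext fun ω => happrox t ht ε u ω
        rw [heqf]
        exact this
    · filter_upwards [hJh.2, hJk.2] with ω hωh hωk
      exact (tendsto_const_nhds.mul (hωk.sub hωh))
  -- J 1 = |X0 - Y0| a.s.
  have hJ1 : ∀ᵐ ω ∂P, J 1 ω = |X0 ω - Y0 ω| := by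
    filter_upwards [hrepl1, hrepl2] with ω h1 h2
    have : Jk 1 ω - Jh 1 ω = X0 ω - Y0 ω := by linarith
    rw [hJdef]
    simp only [this]
    exact hηsign ω
  -- θ is an arbitrage
  apply hNoArb θ hθ𝒜
  refine ⟨J, hJint, ?_, ?_⟩
  · filter_upwards [hJ1] with ω hω
    rw [hω]; exact abs_nonneg _
  · have hne' : P {ω | ¬ X0 ω = Y0 ω} ≠ 0 := by
      intro hcon
      exact hne (by rwa [MeasureTheory.ae_iff])
    have hsub : {ω | ¬ X0 ω = Y0 ω}
        ⊆ {ω | 0 < J 1 ω} ∪ {ω | ¬ J 1 ω = |X0 ω - Y0 ω|} := by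
      intro ω hω
      by_cases hJω : J 1 ω = |X0 ω - Y0 ω|
      · left
        rw [Set.mem_setOf_eq, hJω]
        exact abs_pos.2 (sub_ne_zero.2 hω)
      · right; exact hJω
    have hnull : P {ω | ¬ J 1 ω = |X0 ω - Y0 ω|} = 0 := by
      rwa [MeasureTheory.ae_iff] at hJ1
    have hle : P {ω | ¬ X0 ω = Y0 ω}
        ≤ P {ω | 0 < J 1 ω} + P {ω | ¬ J 1 ω = |X0 ω - Y0 ω|} :=
      (measure_mono hsub).trans (measure_union_le _ _)
    rw [hnull, add_zero] at hle
    have : P {ω | 0 < J 1 ω} ≠ 0 := fun hz => hne' (le_antisymm (hz ▸ hle) zero_le)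
    exact pos_iff_ne_zero.2 this
end
end

section
/- Proposition 4.38, item 2: Let M = (M_t, t∈[0,1]) be a continuous process with M₀ = m₀ a.s. fulfilling the full support condition, and let G = (G_t, t∈[0,1]) be a continuous process with G₀ = 0 a.s. which is independent of M (i.e. the σ-algebras generated by the C([0,1])-valued random variables M and G are independent). Then the process X = M + G (which satisfies X₀ = m₀ a.s.) also fulfills the full support condition. -/
open MeasureTheory Filter Set Topology

noncomputable section

variable {Ω : Type*} [MeasurableSpace Ω]

/-- Rationals in the unit interval are dense in it. -/
lemma rat_dense_in_Icc {t : ℝ} (ht : t ∈ Icc (0:ℝ) 1) :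
    t ∈ closure {x : ℝ | (∃ q : ℚ, (q:ℝ) = x) ∧ x ∈ Icc (0:ℝ) 1} := by
  rw [Metric.mem_closure_iff]
  intro δ hδ
  rcases lt_or_eq_of_le ht.2 with h1 | h1
  · obtain ⟨q, hq1, hq2⟩ := exists_rat_btwn (lt_min h1 (lt_add_of_pos_right t hδ))
    refine ⟨q, ⟨⟨q, rfl⟩, le_trans ht.1 hq1.le, (lt_min_iff.mp hq2).1.le⟩, ?_⟩
    rw [Real.dist_eq, abs_sub_lt_iff]
    constructor <;> nlinarith [(lt_min_iff.mp hq2).2]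
  · obtain ⟨q, hq1, hq2⟩ := exists_rat_btwn (max_lt (by linarith : (0:ℝ) < 1)
      (by linarith : 1 - δ < 1))
    refine ⟨q, ⟨⟨q, rfl⟩, (max_lt_iff.mp hq1).1.le, hq2.le⟩, ?_⟩
    rw [Real.dist_eq, abs_sub_lt_iff]
    constructor <;> nlinarith [(max_lt_iff.mp hq1).2]

/-- The uniform-tube event is measurable w.r.t. the σ-algebra generated by the process on
`[0,1]`, given continuity of paths and of the target function. -/
lemma tube_event_measurable (Y : ℝ → Ω → ℝ)
    (hYcont : ∀ ω, ContinuousOn (fun t => Y t ω) (Icc 0 1))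
    (f : ℝ → ℝ) (hf : ContinuousOn f (Icc 0 1)) (c : ℝ) :
    MeasurableSet[⨆ t ∈ Icc (0:ℝ) 1,
        MeasurableSpace.comap (Y t) (inferInstance : MeasurableSpace ℝ)]
      {ω | ∀ t ∈ Icc (0:ℝ) 1, |Y t ω - f t| ≤ c} := by
  have hset : {ω | ∀ t ∈ Icc (0:ℝ) 1, |Y t ω - f t| ≤ c}
      = ⋂ (q : {q : ℚ // (q:ℝ) ∈ Icc (0:ℝ) 1}), {ω | |Y q ω - f q| ≤ c} := by
    ext ω
    simp only [mem_setOf_eq, mem_iInter]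
    constructor
    · exact fun h q => h q q.2
    · intro h t ht
      have hcont : ContinuousOn (fun s => |Y s ω - f s|) (Icc 0 1) :=
        ((hYcont ω).sub hf).abs
      have hclosed : IsClosed (Icc (0:ℝ) 1 ∩ (fun s => |Y s ω - f s|) ⁻¹' Iic c) :=
        hcont.preimage_isClosed_of_isClosed isClosed_Icc isClosed_Iic
      have hsub : {x : ℝ | (∃ q : ℚ, (q:ℝ) = x) ∧ x ∈ Icc (0:ℝ) 1}
          ⊆ Icc (0:ℝ) 1 ∩ (fun s => |Y s ω - f s|) ⁻¹' Iic c := by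
        rintro x ⟨⟨q, rfl⟩, hx⟩
        exact ⟨hx, h ⟨q, hx⟩⟩
      have := hclosed.closure_subset_iff.mpr hsub (rat_dense_in_Icc ht)
      exact this.2
  rw [hset]
  refine MeasurableSet.iInter fun q => ?_
  have hle : MeasurableSpace.comap (Y q) (inferInstance : MeasurableSpace ℝ)
      ≤ ⨆ t ∈ Icc (0:ℝ) 1, MeasurableSpace.comap (Y t) (inferInstance : MeasurableSpace ℝ) :=
    le_biSup (fun t => MeasurableSpace.comap (Y t) (inferInstance : MeasurableSpace ℝ)) q.2
  refine hle _ ⟨{x | |x - f q| ≤ c}, ?_, rfl⟩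
  exact isClosed_le (continuous_abs.comp (continuous_id.sub continuous_const)) continuous_const
      |>.measurableSet

/-- `Y` (with `Y₀ = y₀` a.s.) fulfills the full support condition: every continuous
function on `[0,1]` starting at `y₀` is approached uniformly within any `ε > 0` with
positive probability. -/
def FullSupport (P : Measure Ω) (Y : ℝ → Ω → ℝ) (y0 : ℝ) : Prop :=
  ∀ η : ℝ → ℝ, ContinuousOn η (Icc 0 1) → η 0 = y0 →
    ∀ ε : ℝ, 0 < ε → 0 < P {ω | ∀ t ∈ Icc (0:ℝ) 1, |Y t ω - η t| ≤ ε}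

/-- Proposition 4.38, item 2: if `M` fulfills the full support condition and `G` is a
continuous process with `G₀ = 0` independent of `M`, then `X = M + G` fulfills the full
support condition. -/
theorem full_support_add_independent
    (P : Measure Ω) [IsProbabilityMeasure P]
    (M G : ℝ → Ω → ℝ) (m0 : ℝ)
    (hMcont : ∀ ω, ContinuousOn (fun t => M t ω) (Icc 0 1))
    (hGcont : ∀ ω, ContinuousOn (fun t => G t ω) (Icc 0 1))
    (hMmeas : ∀ t, Measurable (M t))
    (hGmeas : ∀ t, Measurable (G t))
    (hM0 : ∀ᵐ ω ∂P, M 0 ω = m0)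
    (hG0 : ∀ᵐ ω ∂P, G 0 ω = 0)
    (hindep : ProbabilityTheory.Indep
      (⨆ t ∈ Icc (0:ℝ) 1, MeasurableSpace.comap (M t) (inferInstance : MeasurableSpace ℝ))
      (⨆ t ∈ Icc (0:ℝ) 1, MeasurableSpace.comap (G t) (inferInstance : MeasurableSpace ℝ))
      P)
    (hMfs : FullSupport P M m0) :
    FullSupport P (fun t ω => M t ω + G t ω) m0 := by
  intro η hη hη0 ε hε
  -- path map of G into C([0,1], ℝ)
  let pG : Ω → C(Icc (0:ℝ) 1, ℝ) := fun ω =>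
    ⟨(Icc (0:ℝ) 1).restrict (fun t => G t ω), continuousOn_iff_continuous_restrict.mp (hGcont ω)⟩
  obtain ⟨S, hScount, hSdense⟩ := TopologicalSpace.exists_countable_dense C(Icc (0:ℝ) 1, ℝ)
  haveI : Countable S := hScount.to_subtype
  -- tube events around elements of S
  set A : S → Set Ω := fun g =>
    {ω | ∀ t ∈ Icc (0:ℝ) 1, |G t ω - IccExtend zero_le_one ⇑(g:C(Icc (0:ℝ) 1, ℝ)) t| ≤ ε/8}
    with hA_def
  have hcover : (Set.univ : Set Ω) ⊆ ⋃ g : S, A g := by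
    intro ω _
    obtain ⟨g, hgS, hgd⟩ := Metric.mem_closure_iff.mp (hSdense (pG ω)) (ε/8) (by linarith)
    refine mem_iUnion.mpr ⟨⟨g, hgS⟩, fun t ht => ?_⟩
    rw [IccExtend_of_mem _ _ ht]
    have h1 : dist (pG ω ⟨t, ht⟩) (g ⟨t, ht⟩) ≤ dist (pG ω) g :=
      ContinuousMap.dist_apply_le_dist _
    rw [dist_comm (pG ω) g] at hgd
    calc |G t ω - g ⟨t, ht⟩| = dist (pG ω ⟨t, ht⟩) (g ⟨t, ht⟩) := rfl
    _ ≤ dist (pG ω) g := h1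
    _ ≤ ε/8 := (dist_comm (pG ω) g ▸ hgd).le
  -- some tube has positive probability
  have hex : ∃ g : S, P (A g) ≠ 0 := by
    by_contra h
    push_neg at h
    have h1 : (1 : ENNReal) ≤ P (⋃ g : S, A g) := by
      rw [← measure_univ (μ := P)]; exact measure_mono hcover
    have h2 : P (⋃ g : S, A g) ≤ ∑' g : S, P (A g) := measure_iUnion_le _
    simp only [h, tsum_zero] at h2
    exact absurd (h1.trans h2) (by norm_num)
  obtain ⟨g, hgpos⟩ := hex
  set ge : ℝ → ℝ := IccExtend zero_le_one ⇑(g:C(Icc (0:ℝ) 1, ℝ)) with hge_def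
  have hgec : Continuous ge := (map_continuous _).Icc_extend'
  -- intersect with {G 0 = 0} to see the tube function starts near 0
  have hcompl : P ({ω | G 0 ω = 0}ᶜ) = 0 := by
    rw [ae_iff] at hG0; convert hG0 using 2; rfl
  have hPB : P (A g ∩ {ω | G 0 ω = 0}) = P (A g) := measure_inter_conull hcompl
  have hBne : (A g ∩ {ω | G 0 ω = 0}).Nonempty := by
    apply nonempty_of_measure_ne_zero (μ := P); rw [hPB]; exact hgpos
  obtain ⟨ω₀, hω₀A, hω₀0⟩ := hBne
  have hc0 : |ge 0| ≤ ε/8 := by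
    have h := hω₀A 0 (by norm_num)
    rw [hω₀0, zero_sub, abs_neg] at h
    exact h
  set c0 : ℝ := ge 0 with hc0_def
  set η' : ℝ → ℝ := fun t => η t - (ge t - c0) with hη'_def
  have hη'cont : ContinuousOn η' (Icc 0 1) :=
    hη.sub ((hgec.continuousOn).sub continuousOn_const)
  have hη'0 : η' 0 = m0 := by simp [hη'_def, hη0, hc0_def]
  have hAM := hMfs η' hη'cont hη'0 (ε/2) (by linarith)
  -- measurability of events
  have hAMmeas := tube_event_measurable M hMcont η' hη'cont (ε/2)
  have hAmeas := tube_event_measurable G hGcont ge (hgec.continuousOn) (ε/8)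
  have hG0meas : MeasurableSet[⨆ t ∈ Icc (0:ℝ) 1,
      MeasurableSpace.comap (G t) (inferInstance : MeasurableSpace ℝ)] {ω | G 0 ω = 0} := by
    have hle : MeasurableSpace.comap (G 0) (inferInstance : MeasurableSpace ℝ)
        ≤ ⨆ t ∈ Icc (0:ℝ) 1, MeasurableSpace.comap (G t) (inferInstance : MeasurableSpace ℝ) :=
      le_biSup (fun t => MeasurableSpace.comap (G t) (inferInstance : MeasurableSpace ℝ))
        (by norm_num : (0:ℝ) ∈ Icc (0:ℝ) 1)
    refine hle _ ⟨{0}, measurableSet_singleton 0, ?_⟩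
    ext ω; simp
  rw [ProbabilityTheory.Indep_iff] at hindep
  have hkey := hindep _ _ hAMmeas (hAmeas.inter hG0meas)
  -- positivity
  have hpos : 0 < P ({ω | ∀ t ∈ Icc (0:ℝ) 1, |M t ω - η' t| ≤ ε/2}
      ∩ (A g ∩ {ω | G 0 ω = 0})) := by
    rw [hkey, hPB]
    exact ENNReal.mul_pos (ne_of_gt hAM) hgpos
  refine lt_of_lt_of_le hpos (measure_mono ?_)
  rintro ω ⟨hωM, hωA, -⟩
  intro t ht
  have h1 := hωM t ht
  have h2 := hωA t ht
  have : M t ω + G t ω - η t = (M t ω - η' t) + (G t ω - ge t) + c0 := by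
    simp [hη'_def]; ring
  rw [this]
  calc |(M t ω - η' t) + (G t ω - ge t) + c0|
      ≤ |(M t ω - η' t) + (G t ω - ge t)| + |c0| := abs_add_le _ _
    _ ≤ |M t ω - η' t| + |G t ω - ge t| + |c0| := by gcongr; exact abs_add_le _ _
    _ ≤ ε/2 + ε/8 + ε/8 := by gcongr
    _ ≤ ε := by linarith
end
end
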